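/- arXiv:1704.04323 — 4 statements merged into one kernel-verified Lean document; each statement's English description precedes it below -/
import Mathlib

section
/- (Douglas' lemma, one direction) If A and B are bounded operators on a Hilbert space H with A A* ≤ λ B B* for some λ ≥ 0, then the range of A is contained in the range of B. -/
open ContinuousLinearMap

set_option maxHeartbeats 1000000 in
/-- Douglas' lemma, one direction: if `A A* ≤ λ B B*` for some `λ ≥ 0`, then
`Ran A ⊆ Ran B`. -/
theorem stmt_4 {H : Type*} [NormedAddCommGroup H] [InnerProductSpace ℂ H]
    [CompleteSpace H] (A B : H →L[ℂ] H) (lam : ℝ) (hlam : 0 ≤ lam)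
    (h : (lam • (B ∘L ContinuousLinearMap.adjoint B)
        - A ∘L ContinuousLinearMap.adjoint A).IsPositive) :
    Set.range A ⊆ Set.range B := by
  have key : ∀ x : H, ‖adjoint A x‖ ≤ Real.sqrt lam * ‖adjoint B x‖ := by
    intro x
    have h2 := h.2 x
    rw [ContinuousLinearMap.reApplyInnerSelf_apply] at h2
    have e1 : ((lam • (B ∘L adjoint B) - A ∘L adjoint A) x) =
        (lam : ℂ) • B (adjoint B x) - A (adjoint A x) := by
      simp [ContinuousLinearMap.smul_apply, ContinuousLinearMap.sub_apply]
    rw [e1] at h2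
    have eB : inner ℂ (B (adjoint B x)) x = (‖adjoint B x‖ : ℂ)^2 := by
      rw [← ContinuousLinearMap.adjoint_inner_right B]
      rw [inner_self_eq_norm_sq_to_K]; norm_cast
    have eA : inner ℂ (A (adjoint A x)) x = (‖adjoint A x‖ : ℂ)^2 := by
      rw [← ContinuousLinearMap.adjoint_inner_right A]
      rw [inner_self_eq_norm_sq_to_K]; norm_cast
    rw [inner_sub_left, inner_smul_left, eB, eA] at h2
    simp only [map_sub, map_mul, Complex.conj_ofReal] at h2
    have h3 : ‖adjoint A x‖^2 ≤ lam * ‖adjoint B x‖^2 := by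
      have hre1 : RCLike.re ((lam:ℂ) * (‖adjoint B x‖:ℂ)^2) = lam * ‖adjoint B x‖^2 := by
        norm_cast
      have hre2 : RCLike.re (((‖adjoint A x‖:ℂ))^2) = ‖adjoint A x‖^2 := by norm_cast
      rw [hre1, hre2] at h2
      linarith
    calc ‖adjoint A x‖ = Real.sqrt (‖adjoint A x‖^2) := by
          rw [Real.sqrt_sq (norm_nonneg _)]
      _ ≤ Real.sqrt (lam * ‖adjoint B x‖^2) := Real.sqrt_le_sqrt h3
      _ = Real.sqrt lam * ‖adjoint B x‖ := by
          rw [Real.sqrt_mul hlam, Real.sqrt_sq (norm_nonneg _)]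
  -- well-definedness helper
  have hWD : ∀ x x' : H, adjoint B x = adjoint B x' → adjoint A x = adjoint A x' := by
    intro x x' hxx
    have : ‖adjoint A x - adjoint A x'‖ ≤ Real.sqrt lam * ‖adjoint B x - adjoint B x'‖ := by
      have := key (x - x'); simpa [map_sub] using this
    rw [hxx, sub_self, norm_zero, mul_zero] at this
    have : ‖adjoint A x - adjoint A x'‖ = 0 := le_antisymm this (norm_nonneg _)
    rwa [norm_sub_eq_zero_iff] at this
  rintro _ ⟨u, rfl⟩
  set S : Submodule ℂ H := LinearMap.range (adjoint B : H →ₗ[ℂ] H) with hS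
  -- the functional on S
  have hmem : ∀ w : S, ∃ x : H, adjoint B x = (w : H) := fun w => w.2
  set φ : S → ℂ := fun w => inner ℂ u (adjoint A (hmem w).choose) with hφ
  have hφval : ∀ (w : S) (x : H), adjoint B x = (w : H) → φ w = inner ℂ u (adjoint A x) := by
    intro w x hx
    have := hWD (hmem w).choose x (((hmem w).choose_spec).trans hx.symm)
    rw [hφ]; simp only []; rw [this]
  have fadd : ∀ w w' : S, φ (w + w') = φ w + φ w' := by
    intro w w'
    obtain ⟨x, hx⟩ := hmem w
    obtain ⟨x', hx'⟩ := hmem w'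
    have hsum : adjoint B (x + x') = ((w + w' : S) : H) := by
      rw [map_add, hx, hx']; rfl
    rw [hφval _ _ hsum, hφval _ _ hx, hφval _ _ hx', map_add, inner_add_right]
  have fsmul : ∀ (c : ℂ) (w : S), φ (c • w) = c * φ w := by
    intro c w
    obtain ⟨x, hx⟩ := hmem w
    have hsm : adjoint B (c • x) = ((c • w : S) : H) := by
      rw [map_smul, hx]; rfl
    rw [hφval _ _ hsm, hφval _ _ hx, map_smul, inner_smul_right]
  have fbound : ∀ w : S, ‖φ w‖ ≤ (‖u‖ * Real.sqrt lam) * ‖w‖ := by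
    intro w
    obtain ⟨x, hx⟩ := hmem w
    rw [hφval _ _ hx]
    calc ‖(inner ℂ u (adjoint A x) : ℂ)‖ ≤ ‖u‖ * ‖adjoint A x‖ := norm_inner_le_norm _ _
      _ ≤ ‖u‖ * (Real.sqrt lam * ‖adjoint B x‖) := by
          exact mul_le_mul_of_nonneg_left (key x) (norm_nonneg _)
      _ = (‖u‖ * Real.sqrt lam) * ‖w‖ := by
          rw [hx, mul_assoc]; rfl
  let f₀ : S →ₗ[ℂ] ℂ :=
    { toFun := φ, map_add' := fadd, map_smul' := fsmul }
  let f : S →L[ℂ] ℂ := f₀.mkContinuous (‖u‖ * Real.sqrt lam) fbound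
  obtain ⟨g, hg, -⟩ := exists_extension_norm_eq S f
  set v : H := (InnerProductSpace.toDual ℂ H).symm g with hv
  refine ⟨v, ?_⟩
  apply ext_inner_right ℂ
  intro x
  have h1 : (inner ℂ (B v) x : ℂ) = inner ℂ v (adjoint B x) :=
    (ContinuousLinearMap.adjoint_inner_right B v x).symm
  have hBx : (adjoint B x) ∈ S := ⟨x, rfl⟩
  have h2 : (inner ℂ v (adjoint B x) : ℂ) = g (adjoint B x) := by
    rw [hv]; exact InnerProductSpace.toDual_symm_apply
  have h3 : g (adjoint B x) = f ⟨adjoint B x, hBx⟩ := hg ⟨adjoint B x, hBx⟩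
  have h4 : f ⟨adjoint B x, hBx⟩ = inner ℂ u (adjoint A x) := hφval ⟨adjoint B x, hBx⟩ x rfl
  have h5 : (inner ℂ u (adjoint A x) : ℂ) = inner ℂ (A u) x :=
    ContinuousLinearMap.adjoint_inner_right A u x
  rw [h1, h2, h3, h4, h5]
end

section
/- (Douglas' lemma, converse direction) If A and B are bounded operators on a Hilbert space H and the range of A is contained in the range of B, then there exists λ ≥ 0 such that A A* ≤ λ B B*. -/
open Filter Topology ContinuousLinearMap

set_option maxHeartbeats 1000000

/-- Douglas' lemma, converse direction: if `Ran A ⊆ Ran B`, then there exists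
`λ ≥ 0` with `A A* ≤ λ B B*`. -/
theorem stmt_5 {H : Type*} [NormedAddCommGroup H] [InnerProductSpace ℂ H]
    [CompleteSpace H] (A B : H →L[ℂ] H) (h : Set.range A ⊆ Set.range B) :
    ∃ lam : ℝ, 0 ≤ lam ∧ (lam • (B ∘L ContinuousLinearMap.adjoint B)
        - A ∘L ContinuousLinearMap.adjoint A).IsPositive := by
  classical
  set N : Submodule ℂ H := LinearMap.ker (B : H →ₗ[ℂ] H) with hN
  set K : Submodule ℂ H := Nᗮ with hK
  have hNclosed : IsClosed (N : Set H) := (ContinuousLinearMap.isClosed_ker B)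
  haveI : CompleteSpace N := hNclosed.completeSpace_coe
  -- uniqueness of preimages in K
  have uniq : ∀ z₁ z₂ : H, z₁ ∈ K → z₂ ∈ K → B z₁ = B z₂ → z₁ = z₂ := by
    intro z₁ z₂ h₁ h₂ hB
    have hker : z₁ - z₂ ∈ N := by
      simp [hN, LinearMap.mem_ker, map_sub, hB]
    have hK' : z₁ - z₂ ∈ K := sub_mem h₁ h₂
    have : z₁ - z₂ ∈ N ⊓ Nᗮ := ⟨hker, hK'⟩
    rw [Submodule.inf_orthogonal_eq_bot, Submodule.mem_bot] at this
    exact sub_eq_zero.mp this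
  -- existence of preimages in K
  have exi : ∀ x : H, ∃ z : H, z ∈ K ∧ B z = A x := by
    intro x
    obtain ⟨y, hy⟩ := h (Set.mem_range_self x)
    refine ⟨y - (N.orthogonalProjectionOnto y : H), ?_, ?_⟩
    · exact N.sub_starProjection_mem_orthogonal y
    · have : B (N.starProjection y) = 0 :=
        (N.orthogonalProjectionOnto y).2
      simp [map_sub, this, hy]
  let f : H → H := fun x => (exi x).choose
  have hfK : ∀ x, f x ∈ K := fun x => (exi x).choose_spec.1
  have hfB : ∀ x, B (f x) = A x := fun x => (exi x).choose_spec.2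
  have hf_eq : ∀ x z, z ∈ K → B z = A x → f x = z := by
    intro x z hz hBz
    exact uniq (f x) z (hfK x) hz (by rw [hfB x, hBz])
  let C : H →ₗ[ℂ] H :=
    { toFun := f
      map_add' := by
        intro x y
        refine hf_eq (x + y) (f x + f y) (add_mem (hfK x) (hfK y)) ?_
        simp [map_add, hfB]
      map_smul' := by
        intro c x
        refine hf_eq (c • x) (c • f x) (Submodule.smul_mem _ _ (hfK x)) ?_
        simp [map_smul, hfB] }
  -- continuity via the closed graph theorem
  have hcont : Continuous C := by
    apply C.continuous_of_seq_closed_graph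
    intro u x y hu hCu
    have hyK : y ∈ K := by
      have hKclosed : IsClosed (K : Set H) := Submodule.isClosed_orthogonal N
      exact hKclosed.mem_of_tendsto hCu (Eventually.of_forall fun n => hfK (u n))
    have hBy : B y = A x := by
      have h1 : Tendsto (fun n => B (C (u n))) atTop (𝓝 (B y)) :=
        (B.continuous.tendsto y).comp hCu
      have h2 : (fun n => B (C (u n))) = fun n => A (u n) := by
        funext n; exact hfB (u n)
      have h3 : Tendsto (fun n => A (u n)) atTop (𝓝 (A x)) :=
        (A.continuous.tendsto x).comp hu
      rw [h2] at h1
      exact tendsto_nhds_unique h1 h3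
    exact (hf_eq x y hyK hBy).symm
  let Cc : H →L[ℂ] H := ⟨C, hcont⟩
  have hfact : A = B ∘L Cc := by
    ext x
    exact (hfB x).symm
  refine ⟨‖Cc‖ ^ 2, sq_nonneg _, ?_, ?_⟩
  · -- self-adjointness
    refine ContinuousLinearMap.isSelfAdjoint_iff_isSymmetric.mp ?_
    have h1 : IsSelfAdjoint (B ∘L ContinuousLinearMap.adjoint B) := by
      rw [ContinuousLinearMap.isSelfAdjoint_iff']
      simp [adjoint_comp, adjoint_adjoint]
    have h2 : IsSelfAdjoint (A ∘L ContinuousLinearMap.adjoint A) := by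
      rw [ContinuousLinearMap.isSelfAdjoint_iff']
      simp [adjoint_comp, adjoint_adjoint]
    exact (IsSelfAdjoint.smul (star_trivial _) h1).sub h2
  · intro x
    rw [reApplyInnerSelf_apply]
    set u := ContinuousLinearMap.adjoint B x with hu
    set w := ContinuousLinearMap.adjoint A x with hw
    have h1 : (inner ℂ (B u) x : ℂ) = inner ℂ u u := by
      rw [← adjoint_inner_right B u x]
    have h2 : (inner ℂ (A w) x : ℂ) = inner ℂ w w := by
      rw [← adjoint_inner_right A w x]
    have hnorm : ‖w‖ ≤ ‖Cc‖ * ‖u‖ := by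
      have : w = ContinuousLinearMap.adjoint Cc u := by
        rw [hw, hfact, adjoint_comp]; rfl
      rw [this]
      calc ‖ContinuousLinearMap.adjoint Cc u‖ ≤ ‖ContinuousLinearMap.adjoint Cc‖ * ‖u‖ :=
            (ContinuousLinearMap.adjoint Cc).le_opNorm u
        _ = ‖Cc‖ * ‖u‖ := by rw [ContinuousLinearMap.adjoint.norm_map]
    simp only [sub_apply, smul_apply, coe_comp', Function.comp_apply, ← hu, ← hw]
    rw [inner_sub_left]
    have h3 : (inner ℂ ((‖Cc‖ ^ 2 : ℝ) • B u) x : ℂ) = (‖Cc‖ ^ 2 : ℝ) • (inner ℂ (B u) x : ℂ) := by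
      rw [RCLike.real_smul_eq_coe_smul (K := ℂ) (‖Cc‖ ^ 2) (B u)]
      exact inner_smul_real_left (B u) x (‖Cc‖ ^ 2)
    rw [h3, h1, h2, inner_self_eq_norm_sq_to_K, inner_self_eq_norm_sq_to_K]
    have : RCLike.re ((‖Cc‖ ^ 2 : ℝ) • ((‖u‖ : ℂ) ^ 2) - (‖w‖ : ℂ) ^ 2)
        = ‖Cc‖ ^ 2 * ‖u‖ ^ 2 - ‖w‖ ^ 2 := by
      simp [RCLike.re_to_complex, Complex.smul_re, ← Complex.ofReal_pow]
    refine le_trans ?_ (le_of_eq this.symm)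
    have hsq : ‖w‖ ^ 2 ≤ (‖Cc‖ * ‖u‖) ^ 2 :=
      pow_le_pow_left₀ (norm_nonneg _) hnorm 2
    nlinarith [norm_nonneg u, norm_nonneg Cc, norm_nonneg w]
end

section
/- Let P = (p_{i,j})_{i,j ∈ ℕ} be the matrix of a bounded positive semidefinite operator on ℓ²(ℕ) such that each row and each column of P has only finitely many nonzero entries. Then P = B B* for some bounded operator B on ℓ²(ℕ) whose matrix is upper triangular (B_{i,j} = 0 for i > j). -/
open Submodule ContinuousLinearMap Set

noncomputable section Stmt9Aux

set_option maxHeartbeats 1000000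
set_option synthInstance.maxHeartbeats 1000000

namespace Stmt9

abbrev H : Type := lp (fun _ : ℕ => ℂ) 2

local notation "⟪" x ", " y "⟫" => @inner ℂ _ _ x y

def e (n : ℕ) : H := lp.single 2 n 1

lemma e_orthonormal : Orthonormal ℂ e := by
  rw [orthonormal_iff_ite]
  intro i j
  rw [e, e, lp.inner_single_left]
  rcases eq_or_ne i j with rfl | h
  · simp [lp.single_apply_self]
  · simp [lp.single_apply_ne 2 j 1 h, h]

lemma inner_e_left (i : ℕ) (x : H) : ⟪e i, x⟫ = x i := by
  rw [e, lp.inner_single_left]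
  simp [RCLike.inner_apply]

lemma e_dense : (span ℂ (Set.range e)).topologicalClosure = ⊤ := by
  rw [Submodule.topologicalClosure_eq_top_iff, Submodule.eq_bot_iff]
  intro x hx
  refine lp.ext (funext fun i => ?_)
  have := (Submodule.mem_orthogonal _ x).mp hx (e i) (subset_span ⟨i, rfl⟩)
  rwa [inner_e_left] at this

variable (S : H →L[ℂ] H)

def v (n : ℕ) : H := S (e n)

def K (n : ℕ) : Submodule ℂ H := (span ℂ (v S '' Set.Ici n)).topologicalClosure

instance (n : ℕ) : CompleteSpace (K S n) :=
  (span ℂ (v S '' Set.Ici n)).isClosed_topologicalClosure.completeSpace_coe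

lemma K_isClosed (n : ℕ) : IsClosed ((K S n : Set H)) :=
  (span ℂ (v S '' Set.Ici n)).isClosed_topologicalClosure

lemma K_antitone {m n : ℕ} (h : m ≤ n) : K S n ≤ K S m :=
  Submodule.topologicalClosure_mono (span_mono (Set.image_mono (Set.Ici_subset_Ici.mpr h)))

lemma v_mem_K (n : ℕ) : v S n ∈ K S n :=
  (span ℂ _).le_topologicalClosure (subset_span ⟨n, Set.self_mem_Ici, rfl⟩)

def d (n : ℕ) : H := v S n - (orthogonalProjection (K S (n + 1)) (v S n) : H)

def g (n : ℕ) : H := ((‖d S n‖ : ℂ))⁻¹ • d S n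

lemma d_mem_orth (n : ℕ) : d S n ∈ (K S (n + 1))ᗮ :=
  Submodule.sub_starProjection_mem_orthogonal _

lemma d_mem_K (n : ℕ) : d S n ∈ K S n :=
  sub_mem (v_mem_K S n) (K_antitone S n.le_succ (Submodule.coe_mem _))

lemma g_mem_orth (n : ℕ) : g S n ∈ (K S (n + 1))ᗮ := smul_mem _ _ (d_mem_orth S n)

lemma g_mem_K (n : ℕ) : g S n ∈ K S n := smul_mem _ _ (d_mem_K S n)

lemma norm_g (n : ℕ) (h : d S n ≠ 0) : ‖g S n‖ = 1 := by
  have h0 : ‖d S n‖ ≠ 0 := norm_ne_zero_iff.mpr h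
  rw [g, norm_smul, norm_inv, Complex.norm_real, Real.norm_eq_abs,
    abs_of_nonneg (norm_nonneg _), inv_mul_cancel₀ h0]

/-- The key step: if `x ∈ K n` and `x ⊥ d n` then `x ∈ K (n+1)`. -/
lemma step {n : ℕ} {x : H} (hx : x ∈ K S n) (hd : ⟪d S n, x⟫ = 0) : x ∈ K S (n + 1) := by
  classical
  set R : H →L[ℂ] H :=
    ContinuousLinearMap.id ℂ H - (K S (n+1)).subtypeL ∘L orthogonalProjection (K S (n+1)) with hR
  have hRapply : ∀ w : H, R w = w - (orthogonalProjection (K S (n+1)) w : H) := fun w => rfl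
  have hRzero : ∀ w ∈ K S (n + 1), R w = 0 := by
    intro w hw
    rw [hRapply, show (orthogonalProjection (K S (n+1)) w : H) = w from
      Submodule.starProjection_eq_self_iff.mpr hw, sub_self]
  have hRv : R (v S n) = d S n := rfl
  -- the image of the generating span under `R` is inside the span of `d n`
  have hspan : span ℂ (v S '' Set.Ici n) ≤ (ℂ ∙ d S n).comap (R : H →ₗ[ℂ] H) := by
    rw [span_le]
    rintro y ⟨k, hk, rfl⟩
    rcases eq_or_lt_of_le (Set.mem_Ici.mp hk) with rfl | hk'
    · simpa [hRv] using Submodule.mem_span_singleton_self (d S n)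
    · have : v S k ∈ K S (n + 1) := v_mem_K S k |>.out |> (K_antitone S hk' ·)
      simp [Submodule.mem_comap, hRzero _ this]
  have hdclosed : IsClosed ((ℂ ∙ d S n : Submodule ℂ H) : Set H) :=
    Submodule.closed_of_finiteDimensional _
  have hz : R x ∈ (ℂ ∙ d S n) := by
    have h1 : R x ∈ R '' closure (span ℂ (v S '' Set.Ici n) : Set H) := ⟨x, hx, rfl⟩
    have h2 := image_closure_subset_closure_image (f := R) R.continuous h1
    have h3 : closure (R '' (span ℂ (v S '' Set.Ici n) : Set H)) ⊆
        (ℂ ∙ d S n : Submodule ℂ H) := by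
      rw [← hdclosed.closure_eq]
      refine closure_mono ?_
      rintro y ⟨w, hw, rfl⟩
      exact hspan hw
    exact h3 h2
  obtain ⟨c, hc⟩ := Submodule.mem_span_singleton.mp hz
  have hinner : ⟪d S n, R x⟫ = 0 := by
    have h4 : ⟪d S n, (orthogonalProjection (K S (n+1)) x : H)⟫ = 0 :=
      inner_left_of_mem_orthogonal (Submodule.coe_mem _) (d_mem_orth S n)
    have := hRapply x
    rw [this, inner_sub_right, hd, h4, sub_zero]
  have hz0 : R x = 0 := by
    rw [← hc] at hinner ⊢
    rw [inner_smul_right] at hinner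
    rcases mul_eq_zero.mp hinner with h | h
    · rw [h, zero_smul]
    · rw [inner_self_eq_zero.mp h, smul_zero]
  have := hRapply x
  rw [hz0] at this
  have hxe : x = (orthogonalProjection (K S (n+1)) x : H) := by
    have := this.symm
    rwa [sub_eq_zero] at this
  rw [hxe]
  exact Submodule.coe_mem _

end Stmt9

namespace Stmt9

variable (S : H →L[ℂ] H)
local notation "⟪" x ", " y "⟫" => @inner ℂ _ _ x y
open Submodule

lemma orth_topologicalClosure (M : Submodule ℂ H) : (M.topologicalClosure)ᗮ = Mᗮ := by
  rw [← Submodule.orthogonal_orthogonal_eq_closure, Submodule.triorthogonal_eq_orthogonal]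

lemma inner_g_d (n : ℕ) {x : H} (h : ⟪g S n, x⟫ = 0) : ⟪d S n, x⟫ = 0 := by
  rcases eq_or_ne (d S n) 0 with h0 | h0
  · simp [h0]
  · have hne : ((‖d S n‖ : ℂ))⁻¹ ≠ 0 := by
      simp [norm_ne_zero_iff.mpr h0]
    rw [g, inner_smul_left, map_inv₀, Complex.conj_ofReal] at h
    exact (mul_eq_zero.mp h).resolve_left hne

lemma mem_orth_span {s : Set H} {x : H} (h : ∀ u ∈ s, ⟪u, x⟫ = 0) : x ∈ (span ℂ s)ᗮ := by
  have : span ℂ s ⟂ span ℂ {x} := Submodule.isOrtho_span.mpr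
    (fun u hu w hw => by rw [Set.mem_singleton_iff.mp hw]; exact h u hu)
  exact this.ge (Submodule.mem_span_singleton_self x)

lemma vanish (hfin : ∀ j : ℕ, {k : ℕ | ⟪v S j, v S k⟫ ≠ 0}.Finite)
    {x : H} (hx : x ∈ K S 0) (hg : ∀ n, ⟪g S n, x⟫ = 0) : x = 0 := by
  have hKn : ∀ n, x ∈ K S n := by
    intro n; induction n with
    | zero => exact hx
    | succ n ih => exact step S ih (inner_g_d S n (hg n))
  have hvj : ∀ j, ⟪v S j, x⟫ = 0 := by
    intro j
    obtain ⟨m, hm⟩ : ∃ m, ∀ k, m ≤ k → ⟪v S j, v S k⟫ = 0 := by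
      obtain ⟨m, hm⟩ := (hfin j).bddAbove
      refine ⟨m + 1, fun k hk => ?_⟩
      by_contra hne
      have := hm hne
      omega
    have hvK : v S j ∈ (K S m)ᗮ := by
      rw [K, orth_topologicalClosure]
      refine mem_orth_span ?_
      rintro u ⟨k, hk, rfl⟩
      have h1 : ⟪v S j, v S k⟫ = 0 := hm k hk
      rw [← inner_conj_symm, h1, map_zero]
    rw [← inner_conj_symm, inner_right_of_mem_orthogonal (hKn m) hvK, map_zero]
  have hxorth : x ∈ (K S 0)ᗮ := by
    rw [K, orth_topologicalClosure]
    refine mem_orth_span ?_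
    rintro u ⟨k, _, rfl⟩
    exact hvj k
  exact inner_self_eq_zero.mp (inner_right_of_mem_orthogonal hx hxorth)

end Stmt9

namespace Stmt9

variable (S : H →L[ℂ] H)
local notation "⟪" x ", " y "⟫" => @inner ℂ _ _ x y
open Submodule

lemma inner_g_g {m n : ℕ} (h : m < n) : ⟪g S m, g S n⟫ = 0 :=
  inner_left_of_mem_orthogonal (K_antitone S h (g_mem_K S n)) (g_mem_orth S m)

abbrev I : Type := {n : ℕ // d S n ≠ 0}

def ghat : I S → K S 0 := fun i => ⟨g S i.1, K_antitone S (Nat.zero_le _) (g_mem_K S i.1)⟩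

lemma ghat_orthonormal : Orthonormal ℂ (ghat S) := by
  constructor
  · intro i
    have : ‖(ghat S i : H)‖ = 1 := norm_g S i.1 i.2
    simpa using this
  · intro i j hij
    have hne : i.1 ≠ j.1 := fun h => hij (Subtype.ext h)
    rw [Submodule.coe_inner]
    rcases lt_or_gt_of_ne hne with h | h
    · exact inner_g_g S h
    · rw [← inner_conj_symm]
      show (starRingEnd ℂ) ⟪g S j.1, g S i.1⟫ = 0
      rw [inner_g_g S h, map_zero]

lemma ghat_span (hfin : ∀ j : ℕ, {k : ℕ | ⟪v S j, v S k⟫ ≠ 0}.Finite) :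
    (span ℂ (Set.range (ghat S)))ᗮ = ⊥ := by
  rw [Submodule.eq_bot_iff]
  intro x hx
  have hg : ∀ n, ⟪g S n, (x : H)⟫ = 0 := by
    intro n
    rcases eq_or_ne (d S n) 0 with h0 | h0
    · simp [g, h0]
    · have := (Submodule.mem_orthogonal _ x).mp hx (ghat S ⟨n, h0⟩)
        (subset_span ⟨⟨n, h0⟩, rfl⟩)
      rwa [Submodule.coe_inner] at this
  have : (x : H) = 0 := vanish S hfin x.2 hg
  exact Subtype.ext this

end Stmt9

end Stmt9Aux

set_option maxHeartbeats 1000000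
set_option synthInstance.maxHeartbeats 1000000

instance : NonUnitalContinuousFunctionalCalculus ℝ (Stmt9.H →L[ℂ] Stmt9.H) IsSelfAdjoint :=
  IsSelfAdjoint.instNonUnitalContinuousFunctionalCalculus

open Stmt9 Submodule

/-- Main theorem of the paper for `d = 1`: a bounded positive semidefinite
operator `P` on `ℓ²(ℕ)` whose matrix is eventually `0` in each row and column
factors as `P = B B*` with `B` bounded and upper triangular. -/
theorem stmt_9 (P : lp (fun _ : ℕ => ℂ) 2 →L[ℂ] lp (fun _ : ℕ => ℂ) 2)
    (hP : P.IsPositive)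
    (hcol : ∀ j : ℕ, {i : ℕ |
        (inner ℂ (P (lp.single 2 j 1)) (lp.single 2 i 1) : ℂ) ≠ 0}.Finite)
    (hrow : ∀ i : ℕ, {j : ℕ |
        (inner ℂ (P (lp.single 2 j 1)) (lp.single 2 i 1) : ℂ) ≠ 0}.Finite) :
    ∃ B : lp (fun _ : ℕ => ℂ) 2 →L[ℂ] lp (fun _ : ℕ => ℂ) 2,
      (∀ i j : ℕ, j < i →
        (inner ℂ (B (lp.single 2 j 1)) (lp.single 2 i 1) : ℂ) = 0) ∧
      P = B ∘L ContinuousLinearMap.adjoint B := by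
  classical
  have h0 : 0 ≤ P := (ContinuousLinearMap.nonneg_iff_isPositive P).mpr hP
  set S : Stmt9.H →L[ℂ] Stmt9.H := CFC.sqrt P with hSdef
  have hSS : S * S = P := CFC.sqrt_mul_sqrt_self P h0
  have hSpos : 0 ≤ S := CFC.sqrt_nonneg P
  have hSsa : IsSelfAdjoint S := hSpos.isSelfAdjoint
  have hSadj : ContinuousLinearMap.adjoint S = S := hSsa
  have hPadj : ContinuousLinearMap.adjoint P = P := hP.isSelfAdjoint
  have hvv : ∀ x y : Stmt9.H, (inner ℂ (S x) (S y) : ℂ) = inner ℂ x (P y) := by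
    intro x y
    rw [← ContinuousLinearMap.adjoint_inner_right, hSadj, ← ContinuousLinearMap.mul_apply, hSS]
  -- finiteness hypothesis in the form needed for `vanish`
  have hfin : ∀ j : ℕ, {k : ℕ | (inner ℂ (v S j) (v S k) : ℂ) ≠ 0}.Finite := by
    intro j
    refine Set.Finite.subset (hrow j) ?_
    intro k hk
    simp only [Set.mem_setOf_eq] at hk ⊢
    intro hc
    apply hk
    have : (inner ℂ (v S j) (v S k) : ℂ) = inner ℂ (Stmt9.e j) (P (Stmt9.e k)) := hvv _ _
    rw [this, ← inner_conj_symm]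
    show (starRingEnd ℂ) (inner ℂ (P (lp.single 2 k 1)) (lp.single 2 j 1) : ℂ) = 0
    rw [hc, map_zero]
  -- the range of `S` lies in `K S 0`
  have hranS : ∀ x : Stmt9.H, S x ∈ Stmt9.K S 0 := by
    set M : Submodule ℂ Stmt9.H := (Stmt9.K S 0).comap (S : Stmt9.H →ₗ[ℂ] Stmt9.H) with hM
    have hcl : IsClosed (M : Set Stmt9.H) :=
      (Stmt9.K_isClosed S 0).preimage S.continuous
    have hle : span ℂ (Set.range Stmt9.e) ≤ M := by
      rw [span_le]
      rintro y ⟨k, rfl⟩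
      exact Stmt9.v_mem_K S k |> Stmt9.K_antitone S (Nat.zero_le k)
    have hcle : (span ℂ (Set.range Stmt9.e)).topologicalClosure ≤ M :=
      Submodule.topologicalClosure_minimal _ hle hcl
    rw [Stmt9.e_dense] at hcle
    intro x
    exact hcle Submodule.mem_top
  -- the Hilbert basis of `K S 0` made of the `g` vectors
  let b : HilbertBasis (Stmt9.I S) ℂ ↥(Stmt9.K S 0) :=
    HilbertBasis.mkOfOrthogonalEqBot (Stmt9.ghat_orthonormal S) (Stmt9.ghat_span S hfin)
  have hb : ⇑b = Stmt9.ghat S := HilbertBasis.coe_mkOfOrthogonalEqBot _ _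
  have honf : Orthonormal ℂ (fun i : Stmt9.I S => Stmt9.e i.1) :=
    Stmt9.e_orthonormal.comp _ Subtype.coe_injective
  let OF := honf.orthogonalFamily
  let ι2 : lp (fun _ : Stmt9.I S => ℂ) 2 →ₗᵢ[ℂ] Stmt9.H := OF.linearIsometry
  let W0 : ↥(Stmt9.K S 0) →ₗᵢ[ℂ] Stmt9.H := ι2.comp b.repr.toLinearIsometry
  let C : Stmt9.H →L[ℂ] Stmt9.H :=
    W0.toContinuousLinearMap ∘L ((orthogonalProjection (Stmt9.K S 0)) ∘L S)
  have hCx : ∀ x : Stmt9.H, C x = W0 ⟨S x, hranS x⟩ := by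
    intro x
    show W0 (orthogonalProjection (Stmt9.K S 0) (S x)) = _
    congr 1
    exact Subtype.ext (Submodule.starProjection_eq_self_iff.mpr (hranS x))
  refine ⟨ContinuousLinearMap.adjoint C, ?_, ?_⟩
  · -- upper triangularity
    intro i j hji
    have key : (inner ℂ (Stmt9.e j) (C (Stmt9.e i)) : ℂ) = 0 := by
      rw [hCx]
      have hsum := OF.hasSum_linearIsometry (b.repr ⟨S (Stmt9.e i), hranS _⟩)
      have h2 := hsum.mapL (innerSL ℂ (Stmt9.e j))
      have hzero : ∀ m : Stmt9.I S,
          (innerSL ℂ (Stmt9.e j))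
            ((LinearIsometry.toSpanSingleton ℂ Stmt9.H (honf.1 m))
              ((b.repr ⟨S (Stmt9.e i), hranS _⟩) m)) = 0 := by
        intro m
        rw [LinearIsometry.toSpanSingleton_apply]
        simp only [innerSL_apply_apply, inner_smul_right]
        rcases eq_or_ne (m : ℕ) j with hm | hm
        · have hcoef : (b.repr ⟨S (Stmt9.e i), hranS _⟩) m = 0 := by
            rw [HilbertBasis.repr_apply_apply, hb, Submodule.coe_inner]
            show (inner ℂ (Stmt9.g S m.1) (S (Stmt9.e i)) : ℂ) = 0
            have hvK : S (Stmt9.e i) ∈ Stmt9.K S (m.1 + 1) := by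
              have : (m : ℕ) + 1 ≤ i := by omega
              exact Stmt9.K_antitone S this (Stmt9.v_mem_K S i)
            exact inner_left_of_mem_orthogonal hvK (Stmt9.g_mem_orth S m.1)
          rw [hcoef, zero_mul]
        · have : (inner ℂ (Stmt9.e j) (Stmt9.e m.1) : ℂ) = 0 :=
            Stmt9.e_orthonormal.2 (Ne.symm hm)
          rw [this, mul_zero]
      have h3 : HasSum (fun _ : Stmt9.I S => (0 : ℂ))
          ((innerSL ℂ (Stmt9.e j)) (ι2 (b.repr ⟨S (Stmt9.e i), hranS _⟩))) := by
        convert h2 using 2 with m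
        · rfl
        exact (hzero m).symm
      have h4 := h3.unique hasSum_zero
      exact h4
    show (inner ℂ ((ContinuousLinearMap.adjoint C) (Stmt9.e j)) (Stmt9.e i) : ℂ) = 0
    rw [ContinuousLinearMap.adjoint_inner_left]
    exact key
  · -- the factorization
    rw [ContinuousLinearMap.adjoint_adjoint]
    refine ContinuousLinearMap.ext fun x => ?_
    refine ext_inner_right ℂ fun y => ?_
    show (inner ℂ (P x) y : ℂ) = inner ℂ ((ContinuousLinearMap.adjoint C) (C x)) y
    rw [ContinuousLinearMap.adjoint_inner_left]
    rw [hCx, hCx, LinearIsometry.inner_map_map, Submodule.coe_inner]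
    rw [hvv]
    conv_lhs => rw [← hPadj]
    rw [ContinuousLinearMap.adjoint_inner_left]
end

section
/- Let N = {0, E₁, I} ⊂ B(ℂ²) be the nest where E₁ is projection onto the first coordinate, and consider the 4×4 block structure on ℂ² ⊗ ℂ². An operator B ∈ Alg N ⊗ Alg N satisfies B_{2,3} = 0 in matrix form (with the ordered basis e₁⊗e₁, e₁⊗e₂, e₂⊗e₁, e₂⊗e₂). Consequently, if U is a 4×4 invertible upper triangular matrix with U_{2,3} ≠ 0, then there is no B in the tensor product algebra Alg N ⊗ Alg N with U U* = B B*. -/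
/-- The Kronecker product of 2×2 matrices realized in `M₄(ℂ)` with respect to
the ordered basis `e₁⊗e₁, e₁⊗e₂, e₂⊗e₁, e₂⊗e₂`. -/
def kron4 (X Y : Matrix (Fin 2) (Fin 2) ℂ) : Matrix (Fin 4) (Fin 4) ℂ :=
  fun i j =>
    X ⟨i.val / 2, by have := i.isLt; omega⟩ ⟨j.val / 2, by have := j.isLt; omega⟩ *
    Y ⟨i.val % 2, by omega⟩ ⟨j.val % 2, by omega⟩

/-- The tensor product `Alg N ⊗ Alg N` of two copies of the nest algebra of the
nest `{0, E₁, I} ⊂ B(ℂ²)` (i.e. the span of Kronecker products of upper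
triangular 2×2 matrices inside `M₄(ℂ)`). -/
noncomputable def tensorNestAlg : Submodule ℂ (Matrix (Fin 4) (Fin 4) ℂ) :=
  Submodule.span ℂ {M : Matrix (Fin 4) (Fin 4) ℂ |
    ∃ X Y : Matrix (Fin 2) (Fin 2) ℂ,
      (∀ i j : Fin 2, j < i → X i j = 0) ∧ (∀ i j : Fin 2, j < i → Y i j = 0) ∧
      M = kron4 X Y}

lemma mem_key : ∀ B ∈ tensorNestAlg, B 1 2 = 0 ∧ B.BlockTriangular id := by
  intro B hB
  refine Submodule.span_induction ?_ ?_ ?_ ?_ hB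
  · rintro M ⟨X, Y, hX, hY, rfl⟩
    constructor
    · exact mul_eq_zero.mpr (Or.inr (hY _ _ (by decide)))
    · intro i j hij
      fin_cases i <;> fin_cases j <;> simp_all <;>
        first
          | exact mul_eq_zero.mpr (Or.inl (hX _ _ (by decide)))
          | exact mul_eq_zero.mpr (Or.inr (hY _ _ (by decide)))
          | exact mul_eq_zero.mpr (Or.inl hX)
          | exact mul_eq_zero.mpr (Or.inr hY)
  · simp [Matrix.BlockTriangular]
  · rintro x y _ _ ⟨hx1, hx2⟩ ⟨hy1, hy2⟩
    exact ⟨by simp [hx1, hy1], hx2.add hy2⟩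
  · rintro c x _ ⟨hx1, hx2⟩
    exact ⟨by simp [hx1], fun i j h => by simp [Matrix.smul_apply, hx2 h]⟩

/-- Every `B ∈ Alg N ⊗ Alg N` has `B_{2,3} = 0` (0-indexed: `B 1 2 = 0`);
consequently, if `U` is an invertible upper triangular 4×4 matrix with
`U_{2,3} ≠ 0`, then `U U*` cannot be written as `B B*` with
`B ∈ Alg N ⊗ Alg N`. -/
theorem stmt_17 :
    (∀ B ∈ tensorNestAlg, B 1 2 = 0) ∧
    ∀ U : Matrix (Fin 4) (Fin 4) ℂ, IsUnit U →
      (∀ i j : Fin 4, j < i → U i j = 0) → U 1 2 ≠ 0 →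
      ¬∃ B ∈ tensorNestAlg,
        U * U.conjTranspose = B * B.conjTranspose := by
  refine ⟨fun B hB => (mem_key B hB).1, ?_⟩
  rintro U hU hUt hU12 ⟨B, hBmem, hEq⟩
  obtain ⟨hB12, hBt⟩ := mem_key B hBmem
  have hUt' : U.BlockTriangular id := fun i j h => hUt i j h
  have hUd : IsUnit U.det := (Matrix.isUnit_iff_isUnit_det U).mp hU
  have hBd : IsUnit B.det := by
    have : IsUnit (B * B.conjTranspose).det := by
      rw [← hEq, Matrix.det_mul, Matrix.det_conjTranspose]
      exact hUd.mul hUd.star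
    rw [Matrix.det_mul] at this
    exact isUnit_of_mul_isUnit_left this
  have hBHd : IsUnit B.conjTranspose.det := by
    rw [Matrix.det_conjTranspose]; exact hBd.star
  haveI : Invertible B := ((Matrix.isUnit_iff_isUnit_det B).mpr hBd).invertible
  haveI : Invertible U := hU.invertible
  set W : Matrix (Fin 4) (Fin 4) ℂ := B⁻¹ * U with hW
  have hWu : W * W.conjTranspose = 1 := by
    rw [hW, Matrix.conjTranspose_mul, Matrix.conjTranspose_nonsing_inv]
    calc B⁻¹ * U * (U.conjTranspose * B.conjTranspose⁻¹)
        = B⁻¹ * (U * U.conjTranspose) * B.conjTranspose⁻¹ := by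
          simp [Matrix.mul_assoc]
      _ = 1 := by
          rw [hEq, ← Matrix.mul_assoc, Matrix.nonsing_inv_mul B hBd,
            Matrix.one_mul, Matrix.mul_nonsing_inv _ hBHd]
  have hWinv : W⁻¹ = W.conjTranspose := by rw [← Matrix.inv_eq_right_inv hWu]
  have hWinvT : W⁻¹.BlockTriangular id := by
    rw [hW, Matrix.mul_inv_rev, Matrix.nonsing_inv_nonsing_inv B hBd]
    exact (Matrix.blockTriangular_inv_of_blockTriangular hUt').mul hBt
  have hWt : W.BlockTriangular id :=
    (Matrix.blockTriangular_inv_of_blockTriangular hBt).mul hUt'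
  have hW12 : W 1 2 = 0 := by
    have h21 : W⁻¹ 2 1 = 0 := hWinvT (by decide)
    rw [hWinv] at h21
    have : star (W 1 2) = 0 := h21
    simpa using congrArg star this
  have hBW : B * W = U := by
    rw [hW, ← Matrix.mul_assoc, Matrix.mul_nonsing_inv B hBd, Matrix.one_mul]
  apply hU12
  have : U 1 2 = ∑ k : Fin 4, B 1 k * W k 2 := by
    rw [← hBW]; rfl
  rw [this, Fin.sum_univ_four, hB12, hW12, hBt (show id (0:Fin 4) < id 1 by decide),
    hWt (show id (2:Fin 4) < id 3 by decide)]
  ring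
end
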